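/- Let a ≥ 0 and d ≥ 2 be integers and n = a+d+1. Let D(Λ(a,1,0,d)) be the n×n integer matrix with rows and columns indexed by K ⊔ {•} ⊔ T (|K| = a, |T| = d), with all diagonal entries 0 and off-diagonal entries: 1 between two distinct K-indices, 1 from a K-index to •, 2 from a K-index to a T-index, 2 from • to every K-index, 1 from • to every T-index, 1 from a T-index to every K-index, 1 from a T-index to •, and 2 between two distinct T-indices. Then D(Λ(a,1,0,d)) is equivalent over ℤ to the diagonal matrix with a+2 diagonal entries equal to 1, followed by d−2 diagonal entries equal to 2, followed by one diagonal entry equal to 8a + 2d. -/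

import Mathlib

set_option maxHeartbeats 1000000


/-- Two square integer matrices are equivalent over ℤ if one is obtained from the
other by multiplying on the left and right by matrices invertible over ℤ. -/
def IntEquiv {m : Type*} [Fintype m] [DecidableEq m] (M N : Matrix m m ℤ) : Prop :=
  ∃ P Q : Matrix m m ℤ, IsUnit P.det ∧ IsUnit Q.det ∧ P * M * Q = N

/-- The distance matrix `D(Λ(a,1,0,d))`, with rows and columns indexed by
`K ⊔ {•} ⊔ T`: indices `< a` form `K`, index `a` is `•`, and indices `> a` form `T`. -/
def lambdaD (a d : ℕ) : Matrix (Fin (a + d + 1)) (Fin (a + d + 1)) ℤ :=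
  Matrix.of fun i j =>
    if i = j then 0
    else if i.val < a then (if j.val < a then 1 else if j.val = a then 1 else 2)
    else if i.val = a then (if j.val < a then 2 else 1)
    else (if j.val < a then 1 else if j.val = a then 1 else 2)


namespace SnfAux

open Matrix

variable {n : ℕ}

/-- Elementary matrix `1 + u vᵀ`. -/
def Ee (u v : Fin n → ℤ) : Matrix (Fin n) (Fin n) ℤ :=
  1 + Matrix.of fun i j => u i * v j

theorem Ee_mul_Ee (u v : Fin n → ℤ) (h : ∑ k, v k * u k = 0) :
    Ee u v * Ee (-u) v = 1 := by
  have hA : (Matrix.of fun i j => u i * v j : Matrix (Fin n) (Fin n) ℤ) *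
      (Matrix.of fun i j => u i * v j) = 0 := by
    ext i j
    simp only [Matrix.mul_apply, Matrix.of_apply, Matrix.zero_apply]
    rw [Finset.sum_congr rfl (fun k _ => show u i * v k * (u k * v j)
      = (u i * v j) * (v k * u k) from by ring), ← Finset.mul_sum, h, mul_zero]
  have hneg : (Matrix.of fun i j => (-u) i * v j)
      = -(Matrix.of fun i j => u i * v j : Matrix (Fin n) (Fin n) ℤ) := by
    ext i j; simp [neg_mul]
  unfold Ee
  rw [hneg]
  have : (1 + Matrix.of fun i j => u i * v j) * (1 + -(Matrix.of fun i j => u i * v j :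
      Matrix (Fin n) (Fin n) ℤ)) = 1 - (Matrix.of fun i j => u i * v j : Matrix (Fin n) (Fin n) ℤ)
      * (Matrix.of fun i j => u i * v j) := by noncomm_ring
  rw [this, hA, sub_zero]

theorem isUnit_Ee (u v : Fin n → ℤ) (h : ∑ k, v k * u k = 0) : IsUnit (Ee u v).det := by
  have h3 : (Ee u v).det * (Ee (-u) v).det = 1 := by
    rw [← Matrix.det_mul, Ee_mul_Ee u v h, Matrix.det_one]
  exact IsUnit.of_mul_eq_one _ h3

theorem Ee_mul (u v : Fin n → ℤ) (M : Matrix (Fin n) (Fin n) ℤ) :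
    Ee u v * M = Matrix.of fun i j => M i j + u i * ∑ k, v k * M k j := by
  rw [Ee, Matrix.add_mul, Matrix.one_mul]
  ext i j
  simp only [Matrix.add_apply, Matrix.of_apply, Matrix.mul_apply]
  congr 1
  rw [Finset.mul_sum]
  exact Finset.sum_congr rfl fun k _ => by ring

theorem mul_Ee (u v : Fin n → ℤ) (M : Matrix (Fin n) (Fin n) ℤ) :
    M * Ee u v = Matrix.of fun i j => M i j + (∑ k, M i k * u k) * v j := by
  rw [Ee, Matrix.mul_add, Matrix.mul_one]
  ext i j
  simp only [Matrix.add_apply, Matrix.of_apply, Matrix.mul_apply]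
  congr 1
  rw [Finset.sum_mul]
  exact Finset.sum_congr rfl fun k _ => by ring

theorem sum_delta_mul (p : ℕ) (hp : p < n) (f : Fin n → ℤ) :
    ∑ k : Fin n, (if (k : Fin n).val = p then (1:ℤ) else 0) * f k = f ⟨p, hp⟩ := by
  rw [Finset.sum_eq_single (⟨p, hp⟩ : Fin n)]
  · simp
  · intro b _ hb
    have hb' : b.val ≠ p := fun hh => hb (Fin.ext hh)
    simp [hb']
  · intro hmem; exact absurd (Finset.mem_univ _) hmem

theorem sum_mul_delta (p : ℕ) (hp : p < n) (f : Fin n → ℤ) :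
    ∑ k : Fin n, f k * (if (k : Fin n).val = p then (1:ℤ) else 0) = f ⟨p, hp⟩ := by
  rw [Finset.sum_congr rfl (fun k _ => mul_comm (f k) _)]
  exact sum_delta_mul p hp f

theorem rowOp_mul (p : ℕ) (hp : p < n) (u : Fin n → ℤ) (M : Matrix (Fin n) (Fin n) ℤ) :
    Ee u (fun k => if (k : Fin n).val = p then (1:ℤ) else 0) * M =
      Matrix.of fun i j => M i j + u i * M ⟨p, hp⟩ j := by
  rw [Ee_mul]
  ext i j
  simp only [Matrix.of_apply]
  rw [sum_delta_mul p hp (fun k => M k j)]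

theorem mul_colOp (p : ℕ) (hp : p < n) (w : Fin n → ℤ) (M : Matrix (Fin n) (Fin n) ℤ) :
    M * Ee (fun k => if (k : Fin n).val = p then (1:ℤ) else 0) w =
      Matrix.of fun i j => M i j + M i ⟨p, hp⟩ * w j := by
  rw [mul_Ee]
  ext i j
  simp only [Matrix.of_apply]
  rw [sum_mul_delta p hp (fun k => M i k)]

theorem isUnit_rowOp (p : ℕ) (hp : p < n) (u : Fin n → ℤ) (h : u ⟨p, hp⟩ = 0) :
    IsUnit (Ee u (fun k => if (k : Fin n).val = p then (1:ℤ) else 0)).det :=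
  isUnit_Ee _ _ (by rw [sum_delta_mul p hp u, h])

theorem isUnit_colOp (p : ℕ) (hp : p < n) (w : Fin n → ℤ) (h : w ⟨p, hp⟩ = 0) :
    IsUnit (Ee (fun k => if (k : Fin n).val = p then (1:ℤ) else 0) w).det :=
  isUnit_Ee _ _ (by rw [sum_mul_delta p hp w, h])

theorem sum_range_interval_const (N lo hi : ℕ) (c : ℤ) :
    ∑ m ∈ Finset.range N, (if lo ≤ m ∧ m < hi then c else 0) = ((min hi N - lo : ℕ) : ℤ) * c := by
  induction N with
  | zero => simp
  | succ N ih =>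
    rw [Finset.sum_range_succ, ih]
    by_cases hN : lo ≤ N ∧ N < hi
    · rw [if_pos hN]
      have h2 : (min hi (N+1) - lo : ℕ) = (min hi N - lo) + 1 := by omega
      rw [h2, Nat.cast_add, Nat.cast_one]; ring
    · rw [if_neg hN]
      have h2 : (min hi (N+1) - lo : ℕ) = (min hi N - lo) := by omega
      rw [h2, add_zero]

theorem sum_interval_const (lo hi : ℕ) (c : ℤ) :
    ∑ k : Fin n, (if lo ≤ (k : Fin n).val ∧ (k : Fin n).val < hi then c else 0)
      = ((min hi n - lo : ℕ) : ℤ) * c := by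
  rw [Fin.sum_univ_eq_sum_range (fun m => if lo ≤ m ∧ m < hi then c else 0) n]
  exact sum_range_interval_const n lo hi c

theorem sum_fin_delta (p : ℕ) (hp : p < n) (c : ℤ) :
    ∑ k : Fin n, (if (k : Fin n).val = p then c else 0) = c := by
  rw [Finset.sum_eq_single (⟨p, hp⟩ : Fin n)]
  · simp
  · intro b _ hb
    have hb' : b.val ≠ p := fun hh => hb (Fin.ext hh)
    simp [hb']
  · intro hmem; exact absurd (Finset.mem_univ _) hmem


def m1 (a d : ℕ) : Matrix (Fin (a + d + 1)) (Fin (a + d + 1)) ℤ :=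
  Matrix.of fun i j =>
    if i.val < a then
      (if i.val = 0 then
        (if j.val < a then (if j.val = 0 then 0 else 1) else if j.val = a then 1 else 2)
       else
        (if j.val < a then (if j.val = 0 then 1 else if j.val = i.val then -1 else 0)
         else if j.val = a then 1 else 2))
    else if i.val = a then
      (if j.val < a then (if j.val = 0 then 2 else 0) else if j.val = a then 0 else 1)
    else if i.val = a + 1 then
      (if j.val < a then (if j.val = 0 then 1 else 0)
       else if j.val = a then 1 else if j.val = a + 1 then 0 else 2)
    else
      (if j.val < a then (if j.val = 0 then 1 else 0)
       else if j.val = a then 1 else if j.val = a + 1 then 2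
       else if j.val = i.val then 0 else 2)

def m2 (a d : ℕ) : Matrix (Fin (a + d + 1)) (Fin (a + d + 1)) ℤ :=
  Matrix.of fun i j =>
    if i.val < a then
      (if i.val = 0 then
        (if j.val < a then (if j.val = 0 then 0 else 1)
         else if j.val = a then 1 else if j.val = a + 1 then 2 else 0)
       else
        (if j.val < a then (if j.val = 0 then 1 else if j.val = i.val then -1 else 0)
         else if j.val = a then 1 else if j.val = a + 1 then 2 else 0))
    else if i.val = a then
      (if j.val < a then (if j.val = 0 then 2 else 0)
       else if j.val = a then 0 else if j.val = a + 1 then 1 else 0)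
    else if i.val = a + 1 then
      (if j.val < a then (if j.val = 0 then 1 else 0)
       else if j.val = a then 1 else if j.val = a + 1 then 0 else 2)
    else
      (if j.val < a then (if j.val = 0 then 1 else 0)
       else if j.val = a then 1 else if j.val = a + 1 then 2
       else if j.val = i.val then -2 else 0)

def m3 (a d : ℕ) : Matrix (Fin (a + d + 1)) (Fin (a + d + 1)) ℤ :=
  Matrix.of fun i j =>
    if i.val < a then
      (if i.val = 0 then
        (if j.val < a then (if j.val = 0 then (a:ℤ) - 1 else 0)
         else if j.val = a then (a:ℤ) else if j.val = a + 1 then 2*(a:ℤ) else 0)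
       else
        (if j.val < a then (if j.val = 0 then 1 else if j.val = i.val then -1 else 0)
         else if j.val = a then 1 else if j.val = a + 1 then 2 else 0))
    else if i.val = a then
      (if j.val < a then (if j.val = 0 then 2 else 0)
       else if j.val = a then 0 else if j.val = a + 1 then 1 else 0)
    else if i.val = a + 1 then
      (if j.val < a then (if j.val = 0 then 1 else 0)
       else if j.val = a then 1 else if j.val = a + 1 then 0 else 2)
    else
      (if j.val < a then (if j.val = 0 then 1 else 0)
       else if j.val = a then 1 else if j.val = a + 1 then 2
       else if j.val = i.val then -2 else 0)

def m4 (a d : ℕ) : Matrix (Fin (a + d + 1)) (Fin (a + d + 1)) ℤ :=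
  Matrix.of fun i j =>
    if i.val < a then
      (if i.val = 0 then
        (if j.val < a then (if j.val = 0 then (a:ℤ) - 1 else 0)
         else if j.val = a then (a:ℤ) else if j.val = a + 1 then 2*(a:ℤ) else 0)
       else (if j.val = i.val then -1 else 0))
    else if i.val = a then
      (if j.val < a then (if j.val = 0 then 2 else 0)
       else if j.val = a then 0 else if j.val = a + 1 then 1 else 0)
    else if i.val = a + 1 then
      (if j.val < a then (if j.val = 0 then 1 else 0)
       else if j.val = a then 1 else if j.val = a + 1 then 0 else 2)
    else
      (if j.val < a then (if j.val = 0 then 1 else 0)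
       else if j.val = a then 1 else if j.val = a + 1 then 2
       else if j.val = i.val then -2 else 0)

def m5 (a d : ℕ) : Matrix (Fin (a + d + 1)) (Fin (a + d + 1)) ℤ :=
  Matrix.of fun i j =>
    if i.val < a then
      (if i.val = 0 then
        (if j.val < a then (if j.val = 0 then -1 else 0)
         else if j.val = a then (a:ℤ) else if j.val = a + 1 then 2*(a:ℤ) else 0)
       else (if j.val = i.val then -1 else 0))
    else if i.val = a then
      (if j.val < a then (if j.val = 0 then 2 else 0)
       else if j.val = a then 0 else if j.val = a + 1 then 1 else 0)
    else if i.val = a + 1 then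
      (if j.val < a then 0
       else if j.val = a then 1 else if j.val = a + 1 then 0 else 2)
    else
      (if j.val < a then 0
       else if j.val = a then 1 else if j.val = a + 1 then 2
       else if j.val = i.val then -2 else 0)

def m6 (a d : ℕ) : Matrix (Fin (a + d + 1)) (Fin (a + d + 1)) ℤ :=
  Matrix.of fun i j =>
    if i.val < a then
      (if i.val = 0 then
        (if j.val < a then (if j.val = 0 then -1 else 0)
         else if j.val = a then (a:ℤ) else if j.val = a + 1 then 2*(a:ℤ) else 0)
       else (if j.val = i.val then -1 else 0))
    else if i.val = a then
      (if j.val < a then 0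
       else if j.val = a then 2*(a:ℤ) else if j.val = a + 1 then 4*(a:ℤ) + 1 else 0)
    else if i.val = a + 1 then
      (if j.val < a then 0
       else if j.val = a then 1 else if j.val = a + 1 then 0 else 2)
    else
      (if j.val < a then 0
       else if j.val = a then 1 else if j.val = a + 1 then 2
       else if j.val = i.val then -2 else 0)

def m7 (a d : ℕ) : Matrix (Fin (a + d + 1)) (Fin (a + d + 1)) ℤ :=
  Matrix.of fun i j =>
    if i.val < a then (if j.val = i.val then -1 else 0)
    else if i.val = a then
      (if j.val < a then 0
       else if j.val = a then 2*(a:ℤ) else if j.val = a + 1 then 4*(a:ℤ) + 1 else 0)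
    else if i.val = a + 1 then
      (if j.val < a then 0
       else if j.val = a then 1 else if j.val = a + 1 then 0 else 2)
    else
      (if j.val < a then 0
       else if j.val = a then 1 else if j.val = a + 1 then 2
       else if j.val = i.val then -2 else 0)

def m8 (a d : ℕ) : Matrix (Fin (a + d + 1)) (Fin (a + d + 1)) ℤ :=
  Matrix.of fun i j =>
    if i.val < a then (if j.val = i.val then -1 else 0)
    else if i.val = a then
      (if j.val = a + 1 then 4*(a:ℤ) + 1 else if a + 2 ≤ j.val then -4*(a:ℤ) else 0)
    else if i.val = a + 1 then
      (if j.val = a then 1 else if a + 2 ≤ j.val then 2 else 0)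
    else
      (if j.val = a + 1 then 2
       else if a + 2 ≤ j.val then (if j.val = i.val then -4 else -2) else 0)

def m9 (a d : ℕ) : Matrix (Fin (a + d + 1)) (Fin (a + d + 1)) ℤ :=
  Matrix.of fun i j =>
    if i.val < a then (if j.val = i.val then -1 else 0)
    else if i.val = a then
      (if j.val = a + 1 then 4*(a:ℤ) + 1 else if a + 2 ≤ j.val then -4*(a:ℤ) else 0)
    else if i.val = a + 1 then (if j.val = a then 1 else 0)
    else
      (if j.val = a + 1 then 2
       else if a + 2 ≤ j.val then (if j.val = i.val then -4 else -2) else 0)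

def m10 (a d : ℕ) : Matrix (Fin (a + d + 1)) (Fin (a + d + 1)) ℤ :=
  Matrix.of fun i j =>
    if i.val < a then (if j.val = i.val then -1 else 0)
    else if i.val = a then
      (if j.val = a + 1 then 1 else if a + 2 ≤ j.val then -4*(a:ℤ) else 0)
    else if i.val = a + 1 then (if j.val = a then 1 else 0)
    else
      (if j.val = a + 1 then (if i.val = a + 2 then -2 else 0)
       else if a + 2 ≤ j.val then (if j.val = i.val then -4 else -2) else 0)

def m11 (a d : ℕ) : Matrix (Fin (a + d + 1)) (Fin (a + d + 1)) ℤ :=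
  Matrix.of fun i j =>
    if i.val < a then (if j.val = i.val then -1 else 0)
    else if i.val = a then (if j.val = a + 1 then 1 else 0)
    else if i.val = a + 1 then (if j.val = a then 1 else 0)
    else if i.val = a + 2 then
      (if j.val = a + 1 then -2
       else if a + 2 ≤ j.val then
        (if j.val = i.val then -4 - 8*(a:ℤ) else -2 - 8*(a:ℤ)) else 0)
    else
      (if a + 2 ≤ j.val then (if j.val = i.val then -4 else -2) else 0)

def m12 (a d : ℕ) : Matrix (Fin (a + d + 1)) (Fin (a + d + 1)) ℤ :=
  Matrix.of fun i j =>
    if i.val < a then (if j.val = i.val then -1 else 0)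
    else if i.val = a then (if j.val = a + 1 then 1 else 0)
    else if i.val = a + 1 then (if j.val = a then 1 else 0)
    else if i.val = a + 2 then
      (if a + 2 ≤ j.val then
        (if j.val = i.val then -4 - 8*(a:ℤ) else -2 - 8*(a:ℤ)) else 0)
    else
      (if a + 2 ≤ j.val then (if j.val = i.val then -4 else -2) else 0)

def m13 (a d : ℕ) : Matrix (Fin (a + d + 1)) (Fin (a + d + 1)) ℤ :=
  Matrix.of fun i j =>
    if i.val < a then (if j.val = i.val then -1 else 0)
    else if i.val = a then (if j.val = a + 1 then 1 else 0)
    else if i.val = a + 1 then (if j.val = a then 1 else 0)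
    else if i.val = a + 2 then
      (if j.val = a + 2 then -4 - 8*(a:ℤ) else if a + 3 ≤ j.val then 2 else 0)
    else
      (if j.val = a + 2 then -2
       else if a + 3 ≤ j.val then (if j.val = i.val then -2 else 0) else 0)

def m14 (a d : ℕ) : Matrix (Fin (a + d + 1)) (Fin (a + d + 1)) ℤ :=
  Matrix.of fun i j =>
    if i.val < a then (if j.val = i.val then -1 else 0)
    else if i.val = a then (if j.val = a + 1 then 1 else 0)
    else if i.val = a + 1 then (if j.val = a then 1 else 0)
    else if i.val = a + 2 then
      (if j.val = a + 2 then -(8*(a:ℤ) + 2*(d:ℤ)) else 0)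
    else
      (if j.val = a + 2 then -2
       else if a + 3 ≤ j.val then (if j.val = i.val then -2 else 0) else 0)

def m15 (a d : ℕ) : Matrix (Fin (a + d + 1)) (Fin (a + d + 1)) ℤ :=
  Matrix.of fun i j =>
    if i.val < a then (if j.val = i.val then -1 else 0)
    else if i.val = a then (if j.val = a + 1 then 1 else 0)
    else if i.val = a + 1 then (if j.val = a then 1 else 0)
    else if i.val = a + 2 then
      (if j.val = a + 2 then -(8*(a:ℤ) + 2*(d:ℤ)) else 0)
    else (if j.val = i.val then -2 else 0)

def m16 (a d : ℕ) : Matrix (Fin (a + d + 1)) (Fin (a + d + 1)) ℤ :=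
  Matrix.of fun i j =>
    if i.val < a then (if j.val = i.val then -1 else 0)
    else if i.val = a then (if j.val = a then 1 else if j.val = a + 1 then 1 else 0)
    else if i.val = a + 1 then (if j.val = a then 1 else 0)
    else if i.val = a + 2 then
      (if j.val = a + 2 then -(8*(a:ℤ) + 2*(d:ℤ)) else 0)
    else (if j.val = i.val then -2 else 0)

def m17 (a d : ℕ) : Matrix (Fin (a + d + 1)) (Fin (a + d + 1)) ℤ :=
  Matrix.of fun i j =>
    if i.val < a then (if j.val = i.val then -1 else 0)
    else if i.val = a then (if j.val = a then 1 else if j.val = a + 1 then 1 else 0)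
    else if i.val = a + 1 then (if j.val = a + 1 then -1 else 0)
    else if i.val = a + 2 then
      (if j.val = a + 2 then -(8*(a:ℤ) + 2*(d:ℤ)) else 0)
    else (if j.val = i.val then -2 else 0)

def m18 (a d : ℕ) : Matrix (Fin (a + d + 1)) (Fin (a + d + 1)) ℤ :=
  Matrix.of fun i j =>
    if i.val < a then (if j.val = i.val then -1 else 0)
    else if i.val = a then (if j.val = a then 1 else 0)
    else if i.val = a + 1 then (if j.val = a + 1 then -1 else 0)
    else if i.val = a + 2 then
      (if j.val = a + 2 then -(8*(a:ℤ) + 2*(d:ℤ)) else 0)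
    else (if j.val = i.val then -2 else 0)

def m19 (a d : ℕ) : Matrix (Fin (a + d + 1)) (Fin (a + d + 1)) ℤ :=
  Matrix.of fun i j =>
    if j.val = i.val then
      (if i.val < a + 2 then 1 else if i.val = a + 2 then 8*(a:ℤ) + 2*(d:ℤ) else 2)
    else 0

variable (a d : ℕ)

/-! ### Step lemmas -/

theorem step1 (hd : 2 ≤ d) :
    lambdaD a d * Ee (fun k => if (k : Fin (a + d + 1)).val = 0 then (1:ℤ) else 0)
      (fun j => if 1 ≤ j.val ∧ j.val < a then (-1:ℤ) else 0) = m1 a d := by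
  rw [mul_colOp (n := a + d + 1) 0 (Nat.succ_pos _)]
  ext i j
  have hi := i.isLt; have hj := j.isLt
  simp only [lambdaD, m1, Matrix.of_apply, Fin.ext_iff, Fin.val_mk]
  repeat' (first | omega | (exfalso; omega) | (simp only [ite_true, ite_false]) | split)

theorem step2 (hd : 2 ≤ d) :
    m1 a d * Ee (fun k => if (k : Fin (a + d + 1)).val = a + 1 then (1:ℤ) else 0)
      (fun j => if a + 2 ≤ j.val then (-1:ℤ) else 0) = m2 a d := by
  rw [mul_colOp (n := a + d + 1) (a+1) (by omega)]
  ext i j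
  have hi := i.isLt; have hj := j.isLt
  simp only [m1, m2, Matrix.of_apply, Fin.val_mk]
  repeat' (first | omega | (exfalso; omega) | (simp only [ite_true, ite_false]) | split)

theorem sum3 (j : Fin (a + d + 1)) :
    ∑ k : Fin (a + d + 1), (if 1 ≤ (k : Fin (a + d + 1)).val ∧ k.val < a then (1:ℤ) else 0)
        * m2 a d k j
      = if j.val < a then (if j.val = 0 then ((a - 1 : ℕ) : ℤ) else -1)
        else if j.val = a then ((a - 1 : ℕ) : ℤ)
        else if j.val = a + 1 then 2 * ((a - 1 : ℕ) : ℤ) else 0 := by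
  have hj := j.isLt
  by_cases h0 : j.val < a
  · by_cases h1 : j.val = 0
    · rw [if_pos h0, if_pos h1,
        Finset.sum_congr rfl (fun k _ => show (if 1 ≤ k.val ∧ k.val < a then (1:ℤ) else 0)
          * m2 a d k j = if 1 ≤ k.val ∧ k.val < a then (1:ℤ) else 0 from by
            have hk := k.isLt
            simp only [m2, Matrix.of_apply]
            repeat' (first | omega | (exfalso; omega) | (simp only [ite_true, ite_false]) | split)),
        sum_interval_const 1 a 1]
      have : min a (a + d + 1) = a := by omega
      rw [this, mul_one]
    · rw [if_pos h0, if_neg h1,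
        Finset.sum_congr rfl (fun k _ => show (if 1 ≤ k.val ∧ k.val < a then (1:ℤ) else 0)
          * m2 a d k j = if k.val = j.val then (-1:ℤ) else 0 from by
            have hk := k.isLt
            simp only [m2, Matrix.of_apply]
            repeat' (first | omega | (exfalso; omega) | (simp only [ite_true, ite_false]) | split)),
        sum_fin_delta j.val (by omega) (-1)]
  · by_cases h2 : j.val = a
    · rw [if_neg h0, if_pos h2,
        Finset.sum_congr rfl (fun k _ => show (if 1 ≤ k.val ∧ k.val < a then (1:ℤ) else 0)
          * m2 a d k j = if 1 ≤ k.val ∧ k.val < a then (1:ℤ) else 0 from by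
            have hk := k.isLt
            simp only [m2, Matrix.of_apply]
            repeat' (first | omega | (exfalso; omega) | (simp only [ite_true, ite_false]) | split)),
        sum_interval_const 1 a 1]
      have : min a (a + d + 1) = a := by omega
      rw [this, mul_one]
    · by_cases h3 : j.val = a + 1
      · rw [if_neg h0, if_neg h2, if_pos h3,
          Finset.sum_congr rfl (fun k _ => show (if 1 ≤ k.val ∧ k.val < a then (1:ℤ) else 0)
            * m2 a d k j = if 1 ≤ k.val ∧ k.val < a then (2:ℤ) else 0 from by
              have hk := k.isLt
              simp only [m2, Matrix.of_apply]
              repeat' (first | omega | (exfalso; omega) | (simp only [ite_true, ite_false]) | split)),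
          sum_interval_const 1 a 2]
        have : min a (a + d + 1) = a := by omega
        rw [this]
        omega
      · rw [if_neg h0, if_neg h2, if_neg h3, Finset.sum_eq_zero]
        intro k _
        have hk := k.isLt
        simp only [m2, Matrix.of_apply]
        repeat' (first | omega | (exfalso; omega) | (simp only [ite_true, ite_false]) | split)

theorem step3 (hd : 2 ≤ d) :
    Ee (fun i : Fin (a + d + 1) => if i.val = 0 then (1:ℤ) else 0)
      (fun k => if 1 ≤ k.val ∧ k.val < a then (1:ℤ) else 0) * m2 a d = m3 a d := by
  rw [Ee_mul]
  ext i j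
  simp only [Matrix.of_apply]
  rw [sum3 a d j]
  have hi := i.isLt; have hj := j.isLt
  simp only [m2, m3, Matrix.of_apply]
  repeat' (first | omega | (exfalso; omega) | (simp only [ite_true, ite_false]) | split)

theorem sum4 (i : Fin (a + d + 1)) :
    ∑ k : Fin (a + d + 1), m3 a d i k
        * (if 1 ≤ (k : Fin (a + d + 1)).val ∧ k.val < a then (1:ℤ) else 0)
      = if 1 ≤ i.val ∧ i.val < a then (-1:ℤ) else 0 := by
  have hi := i.isLt
  by_cases h0 : 1 ≤ i.val ∧ i.val < a
  · rw [if_pos h0,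
      Finset.sum_congr rfl (fun k _ => show m3 a d i k
        * (if 1 ≤ k.val ∧ k.val < a then (1:ℤ) else 0)
        = if k.val = i.val then (-1:ℤ) else 0 from by
          have hk := k.isLt
          simp only [m3, Matrix.of_apply]
          repeat' (first | omega | (exfalso; omega) | (simp only [ite_true, ite_false]) | split)),
      sum_fin_delta i.val (by omega) (-1)]
  · rw [if_neg h0, Finset.sum_eq_zero]
    intro k _
    have hk := k.isLt
    simp only [m3, Matrix.of_apply]
    repeat' (first | omega | (exfalso; omega) | (simp only [ite_true, ite_false]) | split)

theorem step4 (hd : 2 ≤ d) :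
    m3 a d * Ee (fun k => if 1 ≤ (k : Fin (a + d + 1)).val ∧ k.val < a then (1:ℤ) else 0)
      (fun j => if j.val = 0 then (1:ℤ) else if j.val = a then 1
        else if j.val = a + 1 then 2 else 0) = m4 a d := by
  rw [mul_Ee]
  ext i j
  simp only [Matrix.of_apply]
  rw [sum4 a d i]
  have hi := i.isLt; have hj := j.isLt
  simp only [m3, m4, Matrix.of_apply]
  repeat' (first | omega | (exfalso; omega) | (simp only [ite_true, ite_false]) | split)

theorem step5 (hd : 2 ≤ d) :
    m4 a d * Ee (fun k => if (k : Fin (a + d + 1)).val = a then (1:ℤ) else 0)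
      (fun j => if j.val = 0 ∧ 0 < a then (-1:ℤ) else 0) = m5 a d := by
  rw [mul_colOp (n := a + d + 1) a (by omega)]
  ext i j
  have hi := i.isLt; have hj := j.isLt
  simp only [m4, m5, Matrix.of_apply, Fin.val_mk]
  repeat' (first | omega | (exfalso; omega) | (simp only [ite_true, ite_false]) | split)

theorem step6 (hd : 2 ≤ d) :
    Ee (fun i : Fin (a + d + 1) => if i.val = a ∧ 0 < a then (2:ℤ) else 0)
      (fun k => if k.val = 0 then (1:ℤ) else 0) * m5 a d = m6 a d := by
  rw [rowOp_mul (n := a + d + 1) 0 (Nat.succ_pos _)]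
  ext i j
  have hi := i.isLt; have hj := j.isLt
  simp only [m5, m6, Matrix.of_apply, Fin.val_mk]
  repeat' (first | omega | (exfalso; omega) | (simp only [ite_true, ite_false]) | split)

theorem step7 (hd : 2 ≤ d) :
    m6 a d * Ee (fun k => if (k : Fin (a + d + 1)).val = 0 then (1:ℤ) else 0)
      (fun j => if j.val = a ∧ 0 < a then (a:ℤ)
        else if j.val = a + 1 ∧ 0 < a then 2*(a:ℤ) else 0) = m7 a d := by
  rw [mul_colOp (n := a + d + 1) 0 (Nat.succ_pos _)]
  ext i j
  have hi := i.isLt; have hj := j.isLt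
  simp only [m6, m7, Matrix.of_apply, Fin.val_mk]
  repeat' (first | omega | (exfalso; omega) | (simp only [ite_true, ite_false]) | split)

theorem step8 (hd : 2 ≤ d) :
    Ee (fun i : Fin (a + d + 1) => if i.val = a then -2*(a:ℤ)
        else if a + 2 ≤ i.val then -1 else 0)
      (fun k => if k.val = a + 1 then (1:ℤ) else 0) * m7 a d = m8 a d := by
  rw [rowOp_mul (n := a + d + 1) (a+1) (by omega)]
  ext i j
  have hi := i.isLt; have hj := j.isLt
  simp only [m7, m8, Matrix.of_apply, Fin.val_mk]
  repeat' (first | omega | (exfalso; omega) | (simp only [ite_true, ite_false]) | split)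

theorem step9 (hd : 2 ≤ d) :
    m8 a d * Ee (fun k => if (k : Fin (a + d + 1)).val = a then (1:ℤ) else 0)
      (fun j => if a + 2 ≤ j.val then (-2:ℤ) else 0) = m9 a d := by
  rw [mul_colOp (n := a + d + 1) a (by omega)]
  ext i j
  have hi := i.isLt; have hj := j.isLt
  simp only [m8, m9, Matrix.of_apply, Fin.val_mk]
  repeat' (first | omega | (exfalso; omega) | (simp only [ite_true, ite_false]) | split)

theorem step10 (hd : 2 ≤ d) :
    m9 a d * Ee (fun k => if (k : Fin (a + d + 1)).val = a + 2 then (1:ℤ) else 0)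
      (fun j => if j.val = a + 1 then (1:ℤ) else 0) = m10 a d := by
  rw [mul_colOp (n := a + d + 1) (a+2) (by omega)]
  ext i j
  have hi := i.isLt; have hj := j.isLt
  simp only [m9, m10, Matrix.of_apply, Fin.val_mk]
  repeat' (first | omega | (exfalso; omega) | (simp only [ite_true, ite_false]) | split)

theorem step11 (hd : 2 ≤ d) :
    m10 a d * Ee (fun k => if (k : Fin (a + d + 1)).val = a + 1 then (1:ℤ) else 0)
      (fun j => if a + 2 ≤ j.val then 4*(a:ℤ) else 0) = m11 a d := by
  rw [mul_colOp (n := a + d + 1) (a+1) (by omega)]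
  ext i j
  have hi := i.isLt; have hj := j.isLt
  simp only [m10, m11, Matrix.of_apply, Fin.val_mk]
  repeat' (first | omega | (exfalso; omega) | (simp only [ite_true, ite_false]) | split)

theorem step12 (hd : 2 ≤ d) :
    Ee (fun i : Fin (a + d + 1) => if i.val = a + 2 then (2:ℤ) else 0)
      (fun k => if k.val = a then (1:ℤ) else 0) * m11 a d = m12 a d := by
  rw [rowOp_mul (n := a + d + 1) a (by omega)]
  ext i j
  have hi := i.isLt; have hj := j.isLt
  simp only [m11, m12, Matrix.of_apply, Fin.val_mk]
  repeat' (first | omega | (exfalso; omega) | (simp only [ite_true, ite_false]) | split)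

theorem step13 (hd : 2 ≤ d) :
    m12 a d * Ee (fun k => if (k : Fin (a + d + 1)).val = a + 2 then (1:ℤ) else 0)
      (fun j => if a + 3 ≤ j.val then (-1:ℤ) else 0) = m13 a d := by
  rw [mul_colOp (n := a + d + 1) (a+2) (by omega)]
  ext i j
  have hi := i.isLt; have hj := j.isLt
  simp only [m12, m13, Matrix.of_apply, Fin.val_mk]
  repeat' (first | omega | (exfalso; omega) | (simp only [ite_true, ite_false]) | split)

theorem sum14 (hd : 2 ≤ d) (j : Fin (a + d + 1)) :
    ∑ k : Fin (a + d + 1), (if a + 3 ≤ (k : Fin (a + d + 1)).val then (1:ℤ) else 0)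
        * m13 a d k j
      = if j.val = a + 2 then -2 * ((d - 2 : ℕ) : ℤ)
        else if a + 3 ≤ j.val then -2 else 0 := by
  have hj := j.isLt
  by_cases h0 : j.val = a + 2
  · rw [if_pos h0,
      Finset.sum_congr rfl (fun k _ => show (if a + 3 ≤ k.val then (1:ℤ) else 0) * m13 a d k j
        = if a + 3 ≤ k.val ∧ k.val < a + d + 1 then (-2:ℤ) else 0 from by
          have hk := k.isLt
          simp only [m13, Matrix.of_apply]
          repeat' (first | omega | (exfalso; omega) | (simp only [ite_true, ite_false]) | split)),
      sum_interval_const (a+3) (a+d+1) (-2)]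
    have : min (a + d + 1) (a + d + 1) = a + d + 1 := by omega
    rw [this]
    omega
  · by_cases h1 : a + 3 ≤ j.val
    · rw [if_neg h0, if_pos h1,
        Finset.sum_congr rfl (fun k _ => show (if a + 3 ≤ k.val then (1:ℤ) else 0) * m13 a d k j
          = if k.val = j.val then (-2:ℤ) else 0 from by
            have hk := k.isLt
            simp only [m13, Matrix.of_apply]
            repeat' (first | omega | (exfalso; omega) | (simp only [ite_true, ite_false]) | split)),
        sum_fin_delta j.val (by omega) (-2)]
    · rw [if_neg h0, if_neg h1, Finset.sum_eq_zero]
      intro k _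
      have hk := k.isLt
      simp only [m13, Matrix.of_apply]
      repeat' (first | omega | (exfalso; omega) | (simp only [ite_true, ite_false]) | split)

theorem step14 (hd : 2 ≤ d) :
    Ee (fun i : Fin (a + d + 1) => if i.val = a + 2 then (1:ℤ) else 0)
      (fun k => if a + 3 ≤ k.val then (1:ℤ) else 0) * m13 a d = m14 a d := by
  rw [Ee_mul]
  ext i j
  simp only [Matrix.of_apply]
  rw [sum14 a d hd j]
  have hi := i.isLt; have hj := j.isLt
  simp only [m13, m14, Matrix.of_apply]
  repeat' (first | omega | (exfalso; omega) | (simp only [ite_true, ite_false]) | split)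

theorem sum15 (hd : 2 ≤ d) (i : Fin (a + d + 1)) :
    ∑ k : Fin (a + d + 1), m14 a d i k
        * (if a + 3 ≤ (k : Fin (a + d + 1)).val then (-1:ℤ) else 0)
      = if a + 3 ≤ i.val then (2:ℤ) else 0 := by
  have hi := i.isLt
  by_cases h0 : a + 3 ≤ i.val
  · rw [if_pos h0,
      Finset.sum_congr rfl (fun k _ => show m14 a d i k
        * (if a + 3 ≤ k.val then (-1:ℤ) else 0)
        = if k.val = i.val then (2:ℤ) else 0 from by
          have hk := k.isLt
          simp only [m14, Matrix.of_apply]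
          repeat' (first | omega | (exfalso; omega) | (simp only [ite_true, ite_false]) | split)),
      sum_fin_delta i.val (by omega) 2]
  · rw [if_neg h0, Finset.sum_eq_zero]
    intro k _
    have hk := k.isLt
    simp only [m14, Matrix.of_apply]
    repeat' (first | omega | (exfalso; omega) | (simp only [ite_true, ite_false]) | split)

theorem step15 (hd : 2 ≤ d) :
    m14 a d * Ee (fun k => if a + 3 ≤ (k : Fin (a + d + 1)).val then (-1:ℤ) else 0)
      (fun j => if j.val = a + 2 then (1:ℤ) else 0) = m15 a d := by
  rw [mul_Ee]
  ext i j
  simp only [Matrix.of_apply]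
  rw [sum15 a d hd i]
  have hi := i.isLt; have hj := j.isLt
  simp only [m14, m15, Matrix.of_apply]
  repeat' (first | omega | (exfalso; omega) | (simp only [ite_true, ite_false]) | split)

theorem step16 (hd : 2 ≤ d) :
    Ee (fun i : Fin (a + d + 1) => if i.val = a then (1:ℤ) else 0)
      (fun k => if k.val = a + 1 then (1:ℤ) else 0) * m15 a d = m16 a d := by
  rw [rowOp_mul (n := a + d + 1) (a+1) (by omega)]
  ext i j
  have hi := i.isLt; have hj := j.isLt
  simp only [m15, m16, Matrix.of_apply, Fin.val_mk]
  repeat' (first | omega | (exfalso; omega) | (simp only [ite_true, ite_false]) | split)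

theorem step17 (hd : 2 ≤ d) :
    Ee (fun i : Fin (a + d + 1) => if i.val = a + 1 then (-1:ℤ) else 0)
      (fun k => if k.val = a then (1:ℤ) else 0) * m16 a d = m17 a d := by
  rw [rowOp_mul (n := a + d + 1) a (by omega)]
  ext i j
  have hi := i.isLt; have hj := j.isLt
  simp only [m16, m17, Matrix.of_apply, Fin.val_mk]
  repeat' (first | omega | (exfalso; omega) | (simp only [ite_true, ite_false]) | split)

theorem step18 (hd : 2 ≤ d) :
    Ee (fun i : Fin (a + d + 1) => if i.val = a then (1:ℤ) else 0)
      (fun k => if k.val = a + 1 then (1:ℤ) else 0) * m17 a d = m18 a d := by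
  rw [rowOp_mul (n := a + d + 1) (a+1) (by omega)]
  ext i j
  have hi := i.isLt; have hj := j.isLt
  simp only [m17, m18, Matrix.of_apply, Fin.val_mk]
  repeat' (first | omega | (exfalso; omega) | (simp only [ite_true, ite_false]) | split)

/-! ### Sign step -/

def Sdiag (a d : ℕ) : Matrix (Fin (a + d + 1)) (Fin (a + d + 1)) ℤ :=
  Matrix.diagonal (fun i => if i.val = a then (1:ℤ) else -1)

theorem Sdiag_mul_Sdiag : Sdiag a d * Sdiag a d = 1 := by
  unfold Sdiag
  rw [Matrix.diagonal_mul_diagonal,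
    show (fun i : Fin (a + d + 1) => (if i.val = a then (1:ℤ) else -1)
      * if i.val = a then (1:ℤ) else -1) = fun _ => (1:ℤ) from
      funext fun i => by split_ifs <;> norm_num,
    Matrix.diagonal_one]

theorem isUnit_Sdiag : IsUnit (Sdiag a d).det :=
  IsUnit.of_mul_eq_one _ (by rw [← Matrix.det_mul, Sdiag_mul_Sdiag, Matrix.det_one])

theorem step19 (hd : 2 ≤ d) : Sdiag a d * m18 a d = m19 a d := by
  ext i j
  show (Sdiag a d * m18 a d) i j = m19 a d i j
  unfold Sdiag
  rw [Matrix.diagonal_mul]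
  have hi := i.isLt; have hj := j.isLt
  simp only [m18, m19, Matrix.of_apply]
  repeat' (first | omega | (exfalso; omega) | (simp only [ite_true, ite_false]) | split)

/-! ### Permutation step -/

def sigv (a d x : ℕ) : ℕ := if x < a + 2 then x else if x < a + d then x + 1 else a + 2

def isigv (a d x : ℕ) : ℕ := if x < a + 2 then x else if x = a + 2 then a + d else x - 1

def sig (hd : 2 ≤ d) : Equiv.Perm (Fin (a + d + 1)) where
  toFun i := ⟨sigv a d i.val, by have := i.isLt; unfold sigv; repeat' (first | omega | (exfalso; omega) | (simp only [ite_true, ite_false]) | split)⟩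
  invFun j := ⟨isigv a d j.val, by have := j.isLt; unfold isigv; repeat' (first | omega | (exfalso; omega) | (simp only [ite_true, ite_false]) | split)⟩
  left_inv i := by
    apply Fin.ext
    have := i.isLt
    simp only [sigv, isigv, Fin.val_mk]
    repeat' (first | omega | (exfalso; omega) | (simp only [ite_true, ite_false]) | split)
  right_inv j := by
    apply Fin.ext
    have := j.isLt
    simp only [sigv, isigv, Fin.val_mk]
    repeat' (first | omega | (exfalso; omega) | (simp only [ite_true, ite_false]) | split)

theorem intEquiv_submatrix {n : ℕ} (σ : Equiv.Perm (Fin n)) (M : Matrix (Fin n) (Fin n) ℤ) :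
    IntEquiv M (M.submatrix σ σ) := by
  have hPQ : (1 : Matrix (Fin n) (Fin n) ℤ).submatrix ⇑σ ⇑(Equiv.refl (Fin n)) *
      (1 : Matrix (Fin n) (Fin n) ℤ).submatrix ⇑(Equiv.refl (Fin n)) ⇑σ = 1 := by
    rw [Matrix.mul_submatrix_one]
    simp [Matrix.submatrix_submatrix, Matrix.submatrix_one_equiv]
  have hdet : ((1 : Matrix (Fin n) (Fin n) ℤ).submatrix ⇑σ ⇑(Equiv.refl (Fin n))).det *
      ((1 : Matrix (Fin n) (Fin n) ℤ).submatrix ⇑(Equiv.refl (Fin n)) ⇑σ).det = 1 := by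
    rw [← Matrix.det_mul, hPQ, Matrix.det_one]
  refine ⟨(1 : Matrix (Fin n) (Fin n) ℤ).submatrix ⇑σ ⇑(Equiv.refl (Fin n)),
    (1 : Matrix (Fin n) (Fin n) ℤ).submatrix ⇑(Equiv.refl (Fin n)) ⇑σ,
    IsUnit.of_mul_eq_one _ hdet,
    IsUnit.of_mul_eq_one _ (by rw [mul_comm]; exact hdet), ?_⟩
  rw [Matrix.one_submatrix_mul, Matrix.mul_submatrix_one]
  simp [Matrix.submatrix_submatrix]

theorem final (hd : 2 ≤ d) :
    (m19 a d).submatrix (sig a d hd) (sig a d hd)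
      = (Matrix.diagonal fun i : Fin (a + d + 1) =>
          if i.val < a + 2 then (1 : ℤ)
          else if i.val < a + d then 2
          else 8 * a + 2 * d) := by
  ext i j
  have hi := i.isLt; have hj := j.isLt
  simp only [Matrix.submatrix_apply, Matrix.diagonal_apply, m19, Matrix.of_apply, sig,
    Equiv.coe_fn_mk, sigv, Fin.val_mk, Fin.ext_iff]
  repeat' (first | omega | (exfalso; omega) | (simp only [ite_true, ite_false]) | split)

/-! ### IntEquiv machinery -/

theorem intEquiv_trans {m : Type*} [Fintype m] [DecidableEq m] {M N O : Matrix m m ℤ}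
    (h1 : IntEquiv M N) (h2 : IntEquiv N O) : IntEquiv M O := by
  obtain ⟨P1, Q1, hP1, hQ1, hE1⟩ := h1
  obtain ⟨P2, Q2, hP2, hQ2, hE2⟩ := h2
  refine ⟨P2 * P1, Q1 * Q2, ?_, ?_, ?_⟩
  · rw [Matrix.det_mul]; exact hP2.mul hP1
  · rw [Matrix.det_mul]; exact hQ1.mul hQ2
  · rw [← hE2, ← hE1]
    noncomm_ring

theorem intEquiv_left {m : Type*} [Fintype m] [DecidableEq m] {E M N : Matrix m m ℤ}
    (hE : IsUnit E.det) (h : E * M = N) : IntEquiv M N :=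
  ⟨E, 1, hE, by simp, by rw [Matrix.mul_one, h]⟩

theorem intEquiv_right {m : Type*} [Fintype m] [DecidableEq m] {M E N : Matrix m m ℤ}
    (hE : IsUnit E.det) (h : M * E = N) : IntEquiv M N :=
  ⟨1, E, by simp, hE, by rw [Matrix.one_mul, h]⟩

end SnfAux

theorem snf_lambdaD_a10d (a d : ℕ) (hd : 2 ≤ d) :
    IntEquiv (lambdaD a d)
      (Matrix.diagonal fun i : Fin (a + d + 1) =>
        if i.val < a + 2 then (1 : ℤ)
        else if i.val < a + d then 2
        else 8 * a + 2 * d) := by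
  open SnfAux in
  refine intEquiv_trans ?_ (final a d hd ▸ intEquiv_submatrix (sig a d hd) (m19 a d))
  refine intEquiv_trans (intEquiv_right (isUnit_colOp 0 (by omega) _ (by norm_num <;> omega)) (step1 a d hd)) ?_
  refine intEquiv_trans (intEquiv_right (isUnit_colOp (a+1) (by omega) _ (by norm_num <;> omega)) (step2 a d hd)) ?_
  refine intEquiv_trans (intEquiv_left (isUnit_Ee _ _ (Finset.sum_eq_zero fun k _ => by
      have hk := k.isLt; repeat' (first | omega | (exfalso; omega) | (simp only [ite_true, ite_false]) | split))) (step3 a d hd)) ?_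
  refine intEquiv_trans (intEquiv_right (isUnit_Ee _ _ (Finset.sum_eq_zero fun k _ => by
      have hk := k.isLt; repeat' (first | omega | (exfalso; omega) | (simp only [ite_true, ite_false]) | split))) (step4 a d hd)) ?_
  refine intEquiv_trans (intEquiv_right (isUnit_colOp a (by omega) _ (by norm_num <;> omega)) (step5 a d hd)) ?_
  refine intEquiv_trans (intEquiv_left (isUnit_rowOp 0 (by omega) _ (by norm_num <;> omega)) (step6 a d hd)) ?_
  refine intEquiv_trans (intEquiv_right (isUnit_colOp 0 (by omega) _ (by norm_num <;> omega)) (step7 a d hd)) ?_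
  refine intEquiv_trans (intEquiv_left (isUnit_rowOp (a+1) (by omega) _ (by norm_num <;> omega)) (step8 a d hd)) ?_
  refine intEquiv_trans (intEquiv_right (isUnit_colOp a (by omega) _ (by norm_num <;> omega)) (step9 a d hd)) ?_
  refine intEquiv_trans (intEquiv_right (isUnit_colOp (a+2) (by omega) _ (by norm_num <;> omega)) (step10 a d hd)) ?_
  refine intEquiv_trans (intEquiv_right (isUnit_colOp (a+1) (by omega) _ (by norm_num <;> omega)) (step11 a d hd)) ?_
  refine intEquiv_trans (intEquiv_left (isUnit_rowOp a (by omega) _ (by norm_num <;> omega)) (step12 a d hd)) ?_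
  refine intEquiv_trans (intEquiv_right (isUnit_colOp (a+2) (by omega) _ (by norm_num <;> omega)) (step13 a d hd)) ?_
  refine intEquiv_trans (intEquiv_left (isUnit_Ee _ _ (Finset.sum_eq_zero fun k _ => by
      have hk := k.isLt; repeat' (first | omega | (exfalso; omega) | (simp only [ite_true, ite_false]) | split))) (step14 a d hd)) ?_
  refine intEquiv_trans (intEquiv_right (isUnit_Ee _ _ (Finset.sum_eq_zero fun k _ => by
      have hk := k.isLt; repeat' (first | omega | (exfalso; omega) | (simp only [ite_true, ite_false]) | split))) (step15 a d hd)) ?_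
  refine intEquiv_trans (intEquiv_left (isUnit_rowOp (a+1) (by omega) _ (by norm_num <;> omega)) (step16 a d hd)) ?_
  refine intEquiv_trans (intEquiv_left (isUnit_rowOp a (by omega) _ (by norm_num <;> omega)) (step17 a d hd)) ?_
  refine intEquiv_trans (intEquiv_left (isUnit_rowOp (a+1) (by omega) _ (by norm_num <;> omega)) (step18 a d hd)) ?_
  exact intEquiv_left (isUnit_Sdiag a d) (step19 a d hd)
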